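/- Let m ≥ 1 and n ≥ 1 be integers and let x be a real number with 0 < x < π. Then the sum over all even indices k with 0 ≤ k ≤ n of C(n-k+m, m) · sin((k+1/2)x) is strictly positive. -/

import Mathlib

open Real Finset

noncomputable def dd (t : ℝ) (q : ℕ) : ℝ := Real.cos t - Real.cos ((4*(q:ℝ)+3)*t)

lemma pts1 (t a : ℝ) : Real.sin (a + 2*t) - Real.sin (a - 2*t) = 2 * Real.sin (2*t) * Real.cos a := by
  rw [Real.sin_add, Real.sin_sub]; ring

lemma pts2 (t a : ℝ) : Real.cos (a - 2*t) - Real.cos (a + 2*t) = 2 * Real.sin (2*t) * Real.sin a := by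
  rw [Real.cos_add, Real.cos_sub]; ring

lemma L1 (t : ℝ) (Q : ℕ) : 2 * Real.sin (2*t) * (∑ q ∈ range (Q+1), Real.cos ((4*(q:ℝ)+3)*t))
    = Real.sin ((4*(Q:ℝ)+5)*t) - Real.sin t := by
  induction Q with
  | zero =>
    rw [Finset.sum_range_one]
    have h := pts1 t ((4*((0:ℕ):ℝ)+3)*t)
    have e1 : (4*((0:ℕ):ℝ)+3)*t + 2*t = (4*((0:ℕ):ℝ)+5)*t := by push_cast; ring
    have e2 : (4*((0:ℕ):ℝ)+3)*t - 2*t = t := by push_cast; ring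
    rw [e1, e2] at h; linarith
  | succ Q ih =>
    rw [Finset.sum_range_succ, mul_add, ih]
    have h := pts1 t ((4*((Q:ℝ)+1)+3)*t)
    have e1 : (4*((Q:ℝ)+1)+3)*t + 2*t = (4*((Q+1:ℕ):ℝ)+5)*t := by push_cast; ring
    have e2 : (4*((Q:ℝ)+1)+3)*t - 2*t = (4*(Q:ℝ)+5)*t := by push_cast; ring
    have e3 : (4*((Q+1:ℕ):ℝ)+3)*t = (4*((Q:ℝ)+1)+3)*t := by push_cast; ring
    rw [e1, e2] at h
    rw [e3]
    linarith

lemma L2 (t : ℝ) (ht0 : 0 < t) (ht : t < π/2) (Q : ℕ) : 0 < ∑ q ∈ range (Q+1), dd t q := by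
  have hπ := Real.pi_gt_three
  by_cases hA : (4*(Q:ℝ)+3)*t ≤ π
  · apply Finset.sum_pos _ (by simp)
    intro q hq
    have hq' : (q:ℝ) ≤ (Q:ℝ) := by
      have := Finset.mem_range.mp hq; exact_mod_cast Nat.lt_succ_iff.mp this
    have h1 : t < (4*(q:ℝ)+3)*t := by nlinarith
    have h2 : (4*(q:ℝ)+3)*t ≤ π := by nlinarith
    have := Real.strictAntiOn_cos (Set.mem_Icc.mpr ⟨le_of_lt ht0, by linarith⟩)
      (Set.mem_Icc.mpr ⟨by nlinarith, h2⟩) h1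
    unfold dd; linarith
  · push_neg at hA
    have hs : 0 < Real.sin t := Real.sin_pos_of_pos_of_lt_pi ht0 (by linarith)
    have hs1 : Real.sin t < 1 := by
      have := Real.strictMonoOn_sin (Set.mem_Icc.mpr ⟨by linarith, le_of_lt ht⟩)
        (Set.mem_Icc.mpr ⟨by linarith, le_refl _⟩) ht
      rwa [Real.sin_pi_div_two] at this
    have h2t : 0 < Real.sin (2*t) := Real.sin_pos_of_pos_of_lt_pi (by linarith) (by linarith)
    -- key : 1 < 4(Q+1) s (1+s)
    have key : 1 < 4*((Q:ℝ)+1) * Real.sin t * (1 + Real.sin t) := by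
      have hQ0 : (0:ℝ) ≤ (Q:ℝ) := Nat.cast_nonneg _
      rcases le_or_gt t 1 with h1 | h1
      · have hcube := Real.sin_gt_sub_cube ht0
        have hsq : t^2 ≤ 1 := by nlinarith
        have ht3 : t^3 ≤ t := by nlinarith [mul_le_mul_of_nonneg_left hsq ht0.le]
        have h34 : 3/4*t < Real.sin t := by nlinarith
        have e1 : 3/4*π < 3*((Q:ℝ)+1)*t := by nlinarith
        nlinarith [mul_lt_mul_of_pos_left h34 (show (0:ℝ) < 4*((Q:ℝ)+1) by positivity),
          mul_nonneg (mul_nonneg (show (0:ℝ) ≤ 4*((Q:ℝ)+1) by positivity) hs.le) hs.le]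
      · have hm : Real.sin 1 < Real.sin t := by
          apply Real.strictMonoOn_sin (Set.mem_Icc.mpr ⟨by linarith, by linarith⟩)
            (Set.mem_Icc.mpr ⟨by linarith, le_of_lt ht⟩) h1
        have h1c := Real.sin_gt_sub_cube (one_pos)
        norm_num at h1c
        have h34 : (3/4 : ℝ) < Real.sin t := by linarith
        nlinarith [mul_nonneg (mul_nonneg hQ0 hs.le) (by linarith : (0:ℝ) ≤ 1 + Real.sin t)]
    -- now conclude
    have hsum : ∑ q ∈ range (Q+1), dd t q
        = ((Q:ℝ)+1) * Real.cos t - ∑ q ∈ range (Q+1), Real.cos ((4*(q:ℝ)+3)*t) := by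
      unfold dd
      rw [Finset.sum_sub_distrib, Finset.sum_const, Finset.card_range]
      push_cast; ring
    have hb : Real.sin ((4*(Q:ℝ)+5)*t) ≤ 1 := Real.sin_le_one _
    have hL1 := L1 t Q
    have hc2 : Real.cos t ^ 2 = (1 - Real.sin t) * (1 + Real.sin t) := by
      have := Real.sin_sq_add_cos_sq t; nlinarith
    have hmain : 0 < 2 * Real.sin (2*t) * (∑ q ∈ range (Q+1), dd t q) := by
      rw [hsum, mul_sub, hL1]
      have e : 2 * Real.sin (2*t) * (((Q:ℝ)+1) * Real.cos t)
          = 4*((Q:ℝ)+1) * Real.sin t * Real.cos t ^ 2 := by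
        rw [Real.sin_two_mul]; ring
      rw [e, hc2]
      nlinarith [mul_lt_mul_of_pos_right key (show (0:ℝ) < 1 - Real.sin t by linarith)]
    nlinarith [hmain, h2t]

noncomputable def gg (t : ℝ) (p : ℕ) : ℝ :=
  ∑ k ∈ (Finset.range (p+1)).filter (fun k => Even k), Real.sin ((2*(k:ℝ)+1)*t)

lemma gg_succ (t : ℝ) (p : ℕ) : gg t (p+1)
    = gg t p + (if Even (p+1) then Real.sin ((2*((p:ℝ)+1)+1)*t) else 0) := by
  unfold gg
  rw [Finset.range_add_one, Finset.filter_insert]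
  split_ifs with h
  · rw [Finset.sum_insert (by simp)]
    push_cast; ring
  · rw [add_zero]

lemma gg_closed (t : ℝ) (p : ℕ) : 2 * Real.sin (2*t) * gg t p = dd t (p/2) := by
  induction p with
  | zero =>
    have h0 : gg t 0 = Real.sin ((2*((0:ℕ):ℝ)+1)*t) := by
      unfold gg
      rw [show Finset.range 1 = {0} from rfl, Finset.filter_singleton]
      norm_num
    rw [h0]
    have h := pts2 t t
    have e1 : t - 2*t = -t := by ring
    rw [e1, Real.cos_neg] at h
    unfold dd
    have e2 : (4*(((0:ℕ)/2 : ℕ):ℝ)+3)*t = t + 2*t := by norm_num; ring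
    rw [e2]
    have e3 : (2*((0:ℕ):ℝ)+1)*t = t := by norm_num
    rw [e3]; linarith
  | succ p ih =>
    rw [gg_succ, mul_add]
    split_ifs with h
    · have hodd : ¬ Even p := Nat.even_add_one.mp h
      obtain ⟨q, rfl⟩ : ∃ q, p = 2*q+1 := by
        rcases Nat.even_or_odd p with hp | hp
        · exact absurd hp hodd
        · obtain ⟨r, hr⟩ := hp; exact ⟨r, hr⟩
      rw [show (2*q+1)/2 = q from by omega] at ih
      rw [ih, show (2*q+1+1)/2 = q+1 from by omega]
      have b1 : (2*((↑(2*q+1):ℝ)+1)+1)*t = (4*(q:ℝ)+5)*t := by push_cast; ring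
      rw [b1]
      unfold dd
      have b2 : (4*(↑(q+1):ℝ)+3)*t = (4*(q:ℝ)+5)*t + 2*t := by push_cast; ring
      have b3 : (4*(q:ℝ)+3)*t = (4*(q:ℝ)+5)*t - 2*t := by ring
      rw [b2, b3]
      linarith [pts2 t ((4*(q:ℝ)+5)*t)]
    · have heven : Even p := by
        rcases Nat.even_or_odd p with hp | hp
        · exact hp
        · exact absurd (by simpa using hp.add_one) h
      obtain ⟨r, hr⟩ := heven
      obtain ⟨q, rfl⟩ : ∃ q, p = 2*q := ⟨r, by omega⟩
      rw [mul_zero, add_zero, ih]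
      rw [show (2*q)/2 = q from by omega, show (2*q+1)/2 = q from by omega]

noncomputable def ff (t : ℝ) (n : ℕ) : ℝ :=
  ∑ k ∈ (Finset.range (n+1)).filter (fun k => Even k), ((n:ℝ)+1-(k:ℝ)) * Real.sin ((2*(k:ℝ)+1)*t)

lemma ff_eq_sum (t : ℝ) (n : ℕ) : ff t n = ∑ p ∈ range (n+1), gg t p := by
  induction n with
  | zero =>
    unfold ff gg
    simp only [show Finset.range 1 = {0} from rfl, Finset.filter_singleton,
      Finset.sum_singleton]
    norm_num
  | succ n ih =>
    rw [Finset.sum_range_succ, ← ih]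
    unfold ff gg
    have step1 : ∀ k ∈ (Finset.range (n+2)).filter (fun k => Even k),
        ((↑(n+1):ℝ)+1-(k:ℝ)) * Real.sin ((2*(k:ℝ)+1)*t)
        = ((n:ℝ)+1-(k:ℝ)) * Real.sin ((2*(k:ℝ)+1)*t) + Real.sin ((2*(k:ℝ)+1)*t) := by
      intro k _; push_cast; ring
    rw [Finset.sum_congr rfl step1, Finset.sum_add_distrib]
    congr 1
    rw [Finset.range_add_one, Finset.filter_insert]
    split_ifs with h
    · rw [Finset.sum_insert (by simp)]
      have : ((n:ℝ)+1-(↑(n+1):ℝ)) = 0 := by push_cast; ring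
      rw [this, zero_mul, zero_add]
    · rfl

lemma Esum (t : ℝ) (Q : ℕ) :
    (∑ p ∈ range (2*Q+1), dd t (p/2) = ∑ q ∈ range (Q+1), dd t q + ∑ q ∈ range Q, dd t q)
    ∧ (∑ p ∈ range (2*Q+2), dd t (p/2) = ∑ q ∈ range (Q+1), dd t q + ∑ q ∈ range (Q+1), dd t q) := by
  induction Q with
  | zero =>
    constructor
    · norm_num
    · rw [show 2*0+2 = 2 from rfl]
      rw [Finset.sum_range_succ, Finset.sum_range_succ]
      norm_num
  | succ Q ih =>
    obtain ⟨ih1, ih2⟩ := ih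
    have h1 : ∑ p ∈ range (2*(Q+1)+1), dd t (p/2)
        = ∑ q ∈ range (Q+1+1), dd t q + ∑ q ∈ range (Q+1), dd t q := by
      rw [show 2*(Q+1)+1 = (2*Q+2)+1 from by omega, Finset.sum_range_succ, ih2,
        show (2*Q+2)/2 = Q+1 from by omega, Finset.sum_range_succ _ (Q+1)]
      ring
    refine ⟨h1, ?_⟩
    rw [show 2*(Q+1)+2 = (2*(Q+1)+1)+1 from by omega, Finset.sum_range_succ, h1,
      show (2*(Q+1)+1)/2 = Q+1 from by omega, Finset.sum_range_succ _ (Q+1)]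
    ring

lemma ff_pos (t : ℝ) (ht0 : 0 < t) (ht : t < π/2) (n : ℕ) : 0 < ff t n := by
  have h2t : 0 < Real.sin (2*t) := Real.sin_pos_of_pos_of_lt_pi (by linarith) (by linarith)
  have hfs : 2*Real.sin (2*t) * ff t n = ∑ p ∈ range (n+1), dd t (p/2) := by
    rw [ff_eq_sum, Finset.mul_sum]
    exact Finset.sum_congr rfl (fun p _ => gg_closed t p)
  have hnn : ∀ Q : ℕ, 0 ≤ ∑ q ∈ range Q, dd t q := by
    intro Q
    cases Q with
    | zero => simp
    | succ Q' => exact (L2 t ht0 ht Q').le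
  have hpos : 0 < ∑ p ∈ range (n+1), dd t (p/2) := by
    rcases Nat.even_or_odd n with he | ho
    · obtain ⟨r, hr⟩ := he
      obtain ⟨Q, rfl⟩ : ∃ Q, n = 2*Q := ⟨r, by omega⟩
      rw [(Esum t Q).1]
      have := L2 t ht0 ht Q
      have := hnn Q
      linarith
    · obtain ⟨r, hr⟩ := ho
      obtain ⟨Q, rfl⟩ : ∃ Q, n = 2*Q+1 := ⟨r, by omega⟩
      rw [show 2*Q+1+1 = 2*Q+2 from by omega, (Esum t Q).2]
      have := L2 t ht0 ht Q
      linarith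
  by_contra hcon
  push_neg at hcon
  have : 2*Real.sin (2*t) * ff t n ≤ 0 :=
    mul_nonpos_of_nonneg_of_nonpos (by positivity) hcon
  linarith

noncomputable def SS (m n : ℕ) (x : ℝ) : ℝ :=
  ∑ k ∈ (Finset.range (n + 1)).filter (fun k => Even k),
        ((n - k + m).choose m : ℝ) * Real.sin ((k + 1/2) * x)

lemma SS_one (n : ℕ) (x : ℝ) : SS 1 n x = ff (x/2) n := by
  unfold SS ff
  apply Finset.sum_congr rfl
  intro k hk
  have hk' : k ≤ n := by
    simp only [Finset.mem_filter, Finset.mem_range] at hk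
    omega
  rw [Nat.choose_one_right]
  have hc : ((n - k + 1 : ℕ) : ℝ) = (n:ℝ) + 1 - (k:ℝ) := by
    have e : n - k + 1 = n + 1 - k := by omega
    rw [e, Nat.cast_sub (by omega : k ≤ n + 1)]
    push_cast; ring
  rw [hc, show ((k:ℝ)+1/2)*x = (2*(k:ℝ)+1)*(x/2) from by ring]

lemma SS_step (m n : ℕ) (x : ℝ) : SS (m+1) (n+1) x = SS (m+1) n x + SS m (n+1) x := by
  unfold SS
  have core : ∑ k ∈ (range (n+1)).filter (fun k => Even k),
        ((n+1 - k + (m+1)).choose (m+1) : ℝ) * Real.sin (((k:ℝ) + 1/2)*x)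
      = ∑ k ∈ (range (n+1)).filter (fun k => Even k),
        ((n - k + (m+1)).choose (m+1) : ℝ) * Real.sin (((k:ℝ) + 1/2)*x)
      + ∑ k ∈ (range (n+1)).filter (fun k => Even k),
        ((n+1 - k + m).choose m : ℝ) * Real.sin (((k:ℝ) + 1/2)*x) := by
    rw [← Finset.sum_add_distrib]
    apply Finset.sum_congr rfl
    intro k hk
    have hk' : k ≤ n := by
      simp only [Finset.mem_filter, Finset.mem_range] at hk
      omega
    have e1 : n+1 - k + (m+1) = (n - k + (m+1)) + 1 := by omega
    have e2 : n+1 - k + m = n - k + (m+1) := by omega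
    rw [e1, e2, Nat.choose_succ_succ' (n-k+(m+1)) m]
    push_cast; ring
  have hr : Finset.range (n+1+1) = insert (n+1) (Finset.range (n+1)) := Finset.range_add_one
  rw [hr, Finset.filter_insert]
  split_ifs with h
  · rw [Finset.sum_insert (by simp), Finset.sum_insert (by simp)]
    have c1 : n+1 - (n+1) + (m+1) = m+1 := by omega
    have c2 : n+1 - (n+1) + m = m := by omega
    rw [c1, c2, Nat.choose_self, Nat.choose_self, core]
    push_cast; ring
  · rw [core]

lemma SS_pos (x : ℝ) (hx : 0 < x) (hx' : x < π) : ∀ m, 1 ≤ m → ∀ n, 0 < SS m n x := by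
  have ht0 : 0 < x/2 := by linarith
  have ht : x/2 < π/2 := by linarith
  intro m
  induction m with
  | zero => intro h; exact absurd h (by norm_num)
  | succ m ih =>
    intro _ n
    rcases Nat.eq_zero_or_pos m with rfl | hm
    · rw [show (0+1 : ℕ) = 1 from rfl, SS_one]
      exact ff_pos (x/2) ht0 ht n
    · induction n with
      | zero =>
        unfold SS
        rw [show Finset.range 1 = {0} from rfl, Finset.filter_singleton]
        rw [if_pos (by simp : Even 0), Finset.sum_singleton]
        rw [show (0 - 0 + (m+1)) = m+1 from by omega, Nat.choose_self]
        rw [show (((0:ℕ):ℝ) + 1/2) * x = x/2 from by push_cast; ring]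
        have := Real.sin_pos_of_pos_of_lt_pi ht0 (by linarith)
        push_cast
        linarith
      | succ n ihn =>
        rw [SS_step]
        exact add_pos ihn (ih hm (n+1))

theorem stmt_5 (m n : ℕ) (hm : 1 ≤ m) (hn : 1 ≤ n) (x : ℝ) (hx : 0 < x) (hx' : x < π) :
    0 < ∑ k ∈ (Finset.range (n + 1)).filter (fun k => Even k),
        ((n - k + m).choose m : ℝ) * Real.sin ((k + 1/2) * x) := by
  exact SS_pos x hx hx' m hm n
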